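/- Every sum-symmetric matrix A ∈ ℝ^{n×n} (nonnegative entries, each row sum equal to the corresponding column sum) can be written as a finite nonnegative linear combination of circuit matrices: there exist finitely many index sets α_k ⊆ {1,…,n}, permutations π_k of α_k, and positive reals λ_k such that A = Σ_k λ_k B(α_k, π_k). -/

import Mathlib

open Matrix

/-- The circuit matrix `B(α, π)`: entries `1` if `i, j ∈ α` and `j = π i`, else `0`. -/
def circuitMatrix (n : ℕ) (α : Finset (Fin n)) (e : Equiv.Perm (Fin n)) :
    Matrix (Fin n) (Fin n) ℝ :=
  Matrix.of fun i j => if i ∈ α ∧ j ∈ α ∧ j = e i then 1 else 0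

/-- If `A` is a nonzero sum-symmetric matrix, there is a nonempty nodup list of indices
forming a cycle of positive entries. -/
private lemma exists_pos_cycle (n : ℕ) (A : Matrix (Fin n) (Fin n) ℝ)
    (hA : ∀ i j, 0 ≤ A i j) (hsum : ∀ j, ∑ i, A j i = ∑ i, A i j)
    (hne : A ≠ 0) :
    ∃ l : List (Fin n), l ≠ [] ∧ l.Nodup ∧ ∀ i ∈ l, 0 < A i (l.formPerm i) := by
  classical
  have hpos : ∃ i j, 0 < A i j := by
    by_contra h
    push_neg at h
    apply hne
    ext i j
    exact le_antisymm (h i j) (hA i j)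
  obtain ⟨i0, j0, h0⟩ := hpos
  have step : ∀ x : {x : Fin n // ∃ i, 0 < A i x},
      ∃ y : {x : Fin n // ∃ i, 0 < A i x}, 0 < A x.1 y.1 := by
    rintro ⟨x, i, hix⟩
    have hrow : 0 < ∑ k, A x k := by
      rw [hsum]
      exact lt_of_lt_of_le hix (Finset.single_le_sum (fun k _ => hA k x) (Finset.mem_univ i))
    have hy : ∃ y, 0 < A x y := by
      by_contra h
      push_neg at h
      have : ∑ k, A x k ≤ 0 := Finset.sum_nonpos fun k _ => h k
      linarith
    obtain ⟨y, hy⟩ := hy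
    exact ⟨⟨y, x, hy⟩, hy⟩
  choose nxt hnxt using step
  set f : ℕ → {x : Fin n // ∃ i, 0 < A i x} := fun t => nxt^[t] ⟨j0, i0, h0⟩ with hf
  have hedge : ∀ t, 0 < A (f t).1 (f (t + 1)).1 := by
    intro t
    have h1 : f (t + 1) = nxt (f t) := by
      simp [hf, Function.iterate_succ_apply']
    rw [h1]
    exact hnxt _
  have hrep : ∃ b, ∃ a, a < b ∧ (f a).1 = (f b).1 := by
    obtain ⟨a, b, hab, heq⟩ := Finite.exists_ne_map_eq_of_infinite (fun t => (f t).1)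
    rcases Ne.lt_or_gt hab with h | h
    · exact ⟨b, a, h, heq⟩
    · exact ⟨a, b, h, heq.symm⟩
  obtain ⟨a, hab, heq⟩ := Nat.find_spec hrep
  set b := Nat.find hrep with hb
  set m := b - a with hm
  have hm0 : 0 < m := Nat.sub_pos_of_lt hab
  set l : List (Fin n) := (List.range m).map (fun t => (f (a + t)).1) with hl
  have hlen : l.length = m := by simp [hl]
  have hgl : ∀ t (ht : t < l.length), l[t] = (f (a + t)).1 := by
    intro t ht
    simp [hl]
  have hnd : l.Nodup := by
    refine List.Nodup.map_on ?_ (List.nodup_range)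
    intro s hs t ht hst
    simp only [List.mem_range] at hs ht
    by_contra hne'
    rcases Nat.lt_or_ge s t with h | h
    · exact Nat.find_min hrep (show a + t < b by omega) ⟨a + s, by omega, hst⟩
    · have h' : t < s := by omega
      exact Nat.find_min hrep (show a + s < b by omega) ⟨a + t, by omega, hst.symm⟩
  refine ⟨l, ?_, hnd, ?_⟩
  · intro h
    rw [h] at hlen
    simp at hlen
    omega
  · intro x hx
    obtain ⟨t, ht, rfl⟩ := List.mem_iff_getElem.1 hx
    rw [List.formPerm_apply_getElem _ hnd t ht]
    rw [hgl t ht]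
    rcases Nat.lt_or_ge (t + 1) l.length with h | h
    · have : (t + 1) % l.length = t + 1 := Nat.mod_eq_of_lt h
      rw [hgl _ (by omega)]
      simp only [this]
      exact hedge (a + t)
    · have htm : t + 1 = m := by omega
      have : (t + 1) % l.length = 0 := by
        rw [hlen, htm, Nat.mod_self]
      rw [hgl _ (by omega)]
      simp only [this]
      have h1 : (f (a + 0)).1 = (f (a + t + 1)).1 := by
        have : a + t + 1 = b := by omega
        rw [this]
        simpa using heq
      rw [h1]
      exact hedge (a + t)

private lemma decomp_aux (n : ℕ) : ∀ N (A : Matrix (Fin n) (Fin n) ℝ),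
    (∀ i j, 0 ≤ A i j) → (∀ j, ∑ i, A j i = ∑ i, A i j) →
    (Finset.univ.filter fun p : Fin n × Fin n => A p.1 p.2 ≠ 0).card = N →
    ∃ (k : ℕ) (αs : Fin k → Finset (Fin n)) (es : Fin k → Equiv.Perm (Fin n))
      (lam : Fin k → ℝ),
      (∀ j, ∀ i, i ∈ αs j ↔ (es j) i ∈ αs j) ∧
      (∀ j, 0 < lam j) ∧
      A = ∑ j, lam j • circuitMatrix n (αs j) (es j) := by
  intro N
  induction N using Nat.strong_induction_on with
  | _ N ih =>
    intro A hA hsum hN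
    classical
    by_cases hA0 : A = 0
    · refine ⟨0, fun i => i.elim0, fun i => i.elim0, fun i => i.elim0, ?_, ?_, ?_⟩
      · intro j; exact j.elim0
      · intro j; exact j.elim0
      · simp [hA0]
    · obtain ⟨l, hlne, hnd, hedges⟩ := exists_pos_cycle n A hA hsum hA0
      set α : Finset (Fin n) := l.toFinset with hα
      set e : Equiv.Perm (Fin n) := l.formPerm with he
      have hαne : α.Nonempty := by
        obtain ⟨x, hx⟩ := List.exists_mem_of_ne_nil l hlne
        exact ⟨x, List.mem_toFinset.2 hx⟩
      have hinv : ∀ i, i ∈ α ↔ e i ∈ α := by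
        intro i
        simp only [hα, List.mem_toFinset, he]
        exact (List.formPerm_mem_iff_mem).symm
      set lam0 : ℝ := α.inf' hαne (fun i => A i (e i)) with hlam0
      have hlampos : 0 < lam0 := by
        rw [hlam0, Finset.lt_inf'_iff]
        intro i hi
        exact hedges i (List.mem_toFinset.1 hi)
      have hlamle : ∀ i ∈ α, lam0 ≤ A i (e i) := fun i hi => Finset.inf'_le _ hi
      have hB : ∀ i j, circuitMatrix n α e i j = if i ∈ α ∧ j = e i then 1 else 0 := by
        intro i j
        simp only [circuitMatrix, Matrix.of_apply]
        congr 1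
        simp only [eq_iff_iff]
        constructor
        · rintro ⟨h1, _, h3⟩; exact ⟨h1, h3⟩
        · rintro ⟨h1, rfl⟩; exact ⟨h1, (hinv i).1 h1, rfl⟩
      set A' : Matrix (Fin n) (Fin n) ℝ := A - lam0 • circuitMatrix n α e with hA'def
      have hBnonneg : ∀ i j, 0 ≤ circuitMatrix n α e i j := by
        intro i j
        rw [hB]
        split <;> norm_num
      have hA'entry : ∀ i j, A' i j = A i j - lam0 * circuitMatrix n α e i j := by
        intro i j
        simp [hA'def, Matrix.sub_apply, Matrix.smul_apply, smul_eq_mul]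
      have hA' : ∀ i j, 0 ≤ A' i j := by
        intro i j
        rw [hA'entry, hB]
        by_cases h : i ∈ α ∧ j = e i
        · rw [if_pos h, mul_one]
          obtain ⟨h1, h2⟩ := h
          subst h2
          linarith [hlamle i h1]
        · rw [if_neg h, mul_zero, sub_zero]
          exact hA i j
      have hBrow : ∀ j, ∑ i', circuitMatrix n α e j i' = if j ∈ α then (1:ℝ) else 0 := by
        intro j
        have h1 : ∀ i', circuitMatrix n α e j i' =
            if i' = e j then (if j ∈ α then (1:ℝ) else 0) else 0 := by
          intro i'
          rw [hB]
          by_cases ha : j ∈ α <;> by_cases hb : i' = e j <;> simp [ha, hb]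
        simp [h1]
      have hBcol : ∀ j, ∑ i, circuitMatrix n α e i j = if j ∈ α then (1:ℝ) else 0 := by
        intro j
        have h1 : ∀ i, circuitMatrix n α e i j =
            if i = e⁻¹ j then (if j ∈ α then (1:ℝ) else 0) else 0 := by
          intro i
          rw [hB]
          by_cases h2 : i = e⁻¹ j
          · subst h2
            have hmem : e⁻¹ j ∈ α ↔ j ∈ α := by
              rw [hinv (e⁻¹ j), Equiv.Perm.inv_def, Equiv.apply_symm_apply]
            simp only [Equiv.Perm.inv_def, Equiv.apply_symm_apply, if_pos rfl]
            by_cases h1 : j ∈ α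
            · simpa [h1] using hmem.2 h1
            · have h2 : e⁻¹ j ∉ α := fun h => h1 (hmem.1 h)
              simpa [h1] using h2
          · have h3 : ¬ j = e i := by
              intro h
              exact h2 (by rw [h]; simp)
            simp only [h2, h3, and_false, if_false]
        simp [h1]
      have hsum' : ∀ j, ∑ i, A' j i = ∑ i, A' i j := by
        intro j
        have h1 : ∑ i, A' j i = (∑ i, A j i) - lam0 * (if j ∈ α then (1:ℝ) else 0) := by
          rw [Finset.sum_congr rfl (fun i _ => hA'entry j i), Finset.sum_sub_distrib,
            ← Finset.mul_sum, hBrow]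
        have h2 : ∑ i, A' i j = (∑ i, A i j) - lam0 * (if j ∈ α then (1:ℝ) else 0) := by
          rw [Finset.sum_congr rfl (fun i _ => hA'entry i j), Finset.sum_sub_distrib,
            ← Finset.mul_sum, hBcol]
        rw [h1, h2, hsum j]
      -- support shrinks strictly
      set S : Matrix (Fin n) (Fin n) ℝ → Finset (Fin n × Fin n) :=
        fun X => Finset.univ.filter fun p : Fin n × Fin n => X p.1 p.2 ≠ 0 with hS
      have hsub : S A' ⊆ S A := by
        intro p hp
        simp only [hS, Finset.mem_filter, Finset.mem_univ, true_and] at hp ⊢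
        intro h0
        apply hp
        have hle : A' p.1 p.2 ≤ A p.1 p.2 := by
          rw [hA'entry]
          nlinarith [hBnonneg p.1 p.2, hlampos]
        have := hA' p.1 p.2
        rw [h0] at hle
        linarith
      obtain ⟨i0, hi0, hi0eq⟩ := Finset.exists_mem_eq_inf' hαne (fun i => A i (e i))
      have hkey : (i0, e i0) ∈ S A ∧ (i0, e i0) ∉ S A' := by
        constructor
        · simp only [hS, Finset.mem_filter, Finset.mem_univ, true_and]
          exact ne_of_gt (hedges i0 (List.mem_toFinset.1 hi0))
        · simp only [hS, Finset.mem_filter, Finset.mem_univ, true_and, not_not]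
          rw [hA'entry, hB, if_pos ⟨hi0, rfl⟩, mul_one, ← hi0eq, ← hlam0, sub_self]
      have hlt : (S A').card < N := by
        rw [← hN]
        exact Finset.card_lt_card ⟨hsub, fun h => hkey.2 (h hkey.1)⟩
      obtain ⟨k, αs, es, lam, h1, h2, h3⟩ := ih (S A').card hlt A' hA' hsum' rfl
      refine ⟨k + 1, Fin.cons α αs, Fin.cons e es, Fin.cons lam0 lam, ?_, ?_, ?_⟩
      · intro j
        refine Fin.cases ?_ ?_ j
        · simpa using hinv
        · intro j'
          simpa using h1 j'
      · intro j
        refine Fin.cases ?_ ?_ j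
        · simpa using hlampos
        · intro j'
          simpa using h2 j'
      · rw [Fin.sum_univ_succ]
        simp only [Fin.cons_zero, Fin.cons_succ]
        rw [← h3, hA'def]
        abel

/-- Every sum-symmetric matrix is a finite positive linear combination of circuit
matrices. -/
theorem sum_symmetric_eq_sum_circuit (n : ℕ) (A : Matrix (Fin n) (Fin n) ℝ)
    (hA : ∀ i j, 0 ≤ A i j)
    (hsum : ∀ j, ∑ i, A j i = ∑ i, A i j) :
    ∃ (k : ℕ) (αs : Fin k → Finset (Fin n)) (es : Fin k → Equiv.Perm (Fin n))
      (lam : Fin k → ℝ),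
      (∀ j, ∀ i, i ∈ αs j ↔ (es j) i ∈ αs j) ∧
      (∀ j, 0 < lam j) ∧
      A = ∑ j, lam j • circuitMatrix n (αs j) (es j) := by
  exact decomp_aux n _ A hA hsum rfl
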